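/- Any family M_1, …, M_{2n−1} of matchings of size n in a bipartite graph possesses a rainbow matching of size n. Formally: if A and B are types and M : Fin (2n−1) → Finset (A × B) is such that each M i is a matching of size n, then there exists a rainbow matching of size n for the family M. -/

import Mathlib

/-- A matching in a bipartite graph with sides `A` and `B`: a set of edges (pairs in `A × B`)
such that no two edges share a first or a second coordinate. -/
def IsMatching {A B : Type*} (M : Finset (A × B)) : Prop :=
  (∀ e ∈ M, ∀ f ∈ M, e.1 = f.1 → e = f) ∧ (∀ e ∈ M, ∀ f ∈ M, e.2 = f.2 → e = f)

/-- A family `M` of matchings has a rainbow matching of size `k` if there are `k` edges,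
no two sharing a first or second coordinate, and `k` distinct indices such that the `j`-th
edge belongs to the matching with the `j`-th index. -/
def HasRainbowMatching {A B : Type*} {m : ℕ} (M : Fin m → Finset (A × B)) (k : ℕ) : Prop :=
  ∃ (e : Fin k → A × B) (idx : Fin k → Fin m),
    Function.Injective idx ∧
    Function.Injective (fun j => (e j).1) ∧
    Function.Injective (fun j => (e j).2) ∧
    ∀ j, e j ∈ M (idx j)

namespace DriskoProof

open Finset

variable {A B : Type*} {N : ℕ}

/-- A rainbow matching presented as a finset of (edge, index) pairs:
all first coordinates distinct, all second coordinates distinct, all indices distinct,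
and each edge belongs to the matching of its index. -/
def Good (M : Fin N → Finset (A × B)) (P : Finset ((A × B) × Fin N)) : Prop :=
  (∀ p ∈ P, ∀ q ∈ P, p.1.1 = q.1.1 → p = q) ∧
  (∀ p ∈ P, ∀ q ∈ P, p.1.2 = q.1.2 → p = q) ∧
  (∀ p ∈ P, ∀ q ∈ P, p.2 = q.2 → p = q) ∧
  (∀ p ∈ P, p.1 ∈ M p.2)

lemma good_mono {M : Fin N → Finset (A × B)} {V W : Finset ((A × B) × Fin N)}
    (h : Good M W) (hVW : V ⊆ W) : Good M V :=
  ⟨fun p hp q hq => h.1 p (hVW hp) q (hVW hq),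
   fun p hp q hq => h.2.1 p (hVW hp) q (hVW hq),
   fun p hp q hq => h.2.2.1 p (hVW hp) q (hVW hq),
   fun p hp => h.2.2.2 p (hVW hp)⟩

lemma good_insert [DecidableEq A] [DecidableEq B]
    {M : Fin N → Finset (A × B)} {W : Finset ((A × B) × Fin N)}
    {x : (A × B) × Fin N} (hW : Good M W) (hm : x.1 ∈ M x.2)
    (ha : x.1.1 ∉ W.image fun p => p.1.1)
    (hb : x.1.2 ∉ W.image fun p => p.1.2)
    (hi : x.2 ∉ W.image Prod.snd) :
    Good M (insert x W) := by
  classical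
  have hx : ∀ q ∈ W, x.1.1 ≠ q.1.1 ∧ x.1.2 ≠ q.1.2 ∧ x.2 ≠ q.2 := by
    intro q hq
    refine ⟨fun h => ha ?_, fun h => hb ?_, fun h => hi ?_⟩
    · rw [h]; exact mem_image_of_mem (fun p => p.1.1) hq
    · rw [h]; exact mem_image_of_mem (fun p => p.1.2) hq
    · rw [h]; exact mem_image_of_mem Prod.snd hq
  refine ⟨?_, ?_, ?_, ?_⟩
  · intro p hp q hq h
    rcases mem_insert.mp hp with hpx | hp
    · rcases mem_insert.mp hq with hqx | hq
      · rw [hpx, hqx]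
      · rw [hpx] at h; exact absurd h (hx q hq).1
    · rcases mem_insert.mp hq with hqx | hq
      · rw [hqx] at h; exact absurd h.symm (hx p hp).1
      · exact hW.1 p hp q hq h
  · intro p hp q hq h
    rcases mem_insert.mp hp with hpx | hp
    · rcases mem_insert.mp hq with hqx | hq
      · rw [hpx, hqx]
      · rw [hpx] at h; exact absurd h (hx q hq).2.1
    · rcases mem_insert.mp hq with hqx | hq
      · rw [hqx] at h; exact absurd h.symm (hx p hp).2.1
      · exact hW.2.1 p hp q hq h
  · intro p hp q hq h
    rcases mem_insert.mp hp with hpx | hp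
    · rcases mem_insert.mp hq with hqx | hq
      · rw [hpx, hqx]
      · rw [hpx] at h; exact absurd h (hx q hq).2.2
    · rcases mem_insert.mp hq with hqx | hq
      · rw [hqx] at h; exact absurd h.symm (hx p hp).2.2
      · exact hW.2.2.1 p hp q hq h
  · intro p hp
    rcases mem_insert.mp hp with hpx | hp
    · rw [hpx]; exact hm
    · exact hW.2.2.2 p hp

/-- The augmentation lemma: a rainbow matching of size `k < n` can be enlarged,
provided there are at least `2k+1` matchings, each of size `n`. -/
lemma augment {n : ℕ} (M : Fin N → Finset (A × B))
    (hM : ∀ i, IsMatching (M i) ∧ (M i).card = n)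
    {k : ℕ} (hk : k < n) (hN : 2 * k + 1 ≤ N)
    (P : Finset ((A × B) × Fin N)) (hP : Good M P) (hPc : P.card = k) :
    ∃ Q, Good M Q ∧ Q.card = k + 1 := by
  classical
  set AP : Finset A := P.image (fun p => p.1.1) with hAP
  set BP : Finset B := P.image (fun p => p.1.2) with hBP
  set IP : Finset (Fin N) := P.image Prod.snd with hIP
  have hAPc : AP.card = k := by
    rw [hAP, card_image_of_injOn, hPc]
    intro p hp q hq h
    exact hP.1 p hp q hq h
  have key : ∀ j : ℕ, j ≤ k + 1 →
      ((∃ Q, Good M Q ∧ Q.card = k + 1) ∨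
       (∃ (D : Finset ((A × B) × Fin N)) (used : Finset (Fin N)),
         D ⊆ P ∧ D.card = j ∧ used.card = j ∧ (∀ i ∈ used, i ∉ IP) ∧
         ∀ d ∈ D, ∃ W, Good M W ∧ W.card = k ∧
           (∀ p ∈ P, p ∉ D → p ∈ W) ∧
           (W.image fun p => p.1.2) = BP ∧
           d.1.1 ∉ (W.image fun p => p.1.1) ∧
           (∀ p ∈ W, p.2 ∈ IP ∪ used))) := by
    intro j
    induction j with
    | zero =>
      intro _
      right
      exact ⟨∅, ∅, empty_subset _, rfl, rfl, by simp, by simp⟩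
    | succ j ih =>
      intro hj
      rcases ih (by omega) with done | ⟨D, used, hDP, hDc, hUc, hUdisj, hINV⟩
      · exact Or.inl done
      have hjk : j ≤ k := by
        have := card_le_card hDP
        omega
      -- pick a fresh index u
      have hIPc : IP.card ≤ k := by
        rw [hIP]
        exact le_trans (card_image_le) (le_of_eq hPc)
      obtain ⟨u, hu⟩ : ∃ u : Fin N, u ∉ IP ∪ used := by
        by_contra hcon
        push_neg at hcon
        have hsub : (univ : Finset (Fin N)) ⊆ IP ∪ used := fun x _ => hcon x
        have h1 := card_le_card hsub
        have h2 := card_union_le IP used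
        simp only [card_univ, Fintype.card_fin] at h1
        omega
      have huIP : u ∉ IP := fun h => hu (mem_union_left _ h)
      have huU : u ∉ used := fun h => hu (mem_union_right _ h)
      -- the sets of A- and B-endpoints of D
      set AD : Finset A := D.image (fun p => p.1.1) with hAD
      set BD : Finset B := D.image (fun p => p.1.2) with hBD
      have hADsub : AD ⊆ AP := image_subset_image hDP
      have hADc : AD.card = j := by
        rw [hAD, card_image_of_injOn, hDc]
        intro p hp q hq h
        exact hP.1 p (hDP hp) q (hDP hq) h
      have hBDc : BD.card = j := by
        rw [hBD, card_image_of_injOn, hDc]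
        intro p hp q hq h
        exact hP.2.1 p (hDP hp) q (hDP hq) h
      -- the allowed-head edges of M u
      set E : Finset (A × B) := (M u).filter (fun ed => ed.1 ∉ AP ∨ ed.1 ∈ AD) with hE
      have hEcard : j + 1 ≤ E.card := by
        have hsplit := card_filter_add_card_filter_not
          (s := M u) (p := fun ed => ed.1 ∉ AP ∨ ed.1 ∈ AD)
        rw [← hE] at hsplit
        have hneg : ((M u).filter (fun ed => ¬ (ed.1 ∉ AP ∨ ed.1 ∈ AD))).card ≤ (AP \ AD).card := by
          apply card_le_card_of_injOn (fun ed => ed.1)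
          · intro ed hed
            rw [mem_coe, mem_filter] at hed
            push_neg at hed
            exact mem_sdiff.mpr ⟨hed.2.1, hed.2.2⟩
          · intro x hx y hy hxy
            simp only [coe_filter, Set.mem_setOf_eq] at hx hy
            exact (hM u).1.1 x hx.1 y hy.1 hxy
        have hAPAD : (AP \ AD).card = k - j := by
          rw [card_sdiff_of_subset hADsub, hAPc, hADc]
        have hMu : (M u).card = n := (hM u).2
        omega
      -- pick an allowed-head edge landing outside B(D)
      obtain ⟨e, he⟩ : ∃ e, e ∈ E.filter (fun ed => ed.2 ∉ BD) := by
        have hland : (E.filter (fun ed => ed.2 ∈ BD)).card ≤ j := by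
          rw [← hBDc]
          apply card_le_card_of_injOn (fun ed => ed.2)
          · intro ed hed
            exact (mem_filter.mp hed).2
          · intro x hx y hy hxy
            simp only [coe_filter, Set.mem_setOf_eq] at hx hy
            have hxE := mem_filter.mp hx.1
            have hyE := mem_filter.mp hy.1
            exact (hM u).1.2 x hxE.1 y hyE.1 hxy
        have hsplit := card_filter_add_card_filter_not
          (s := E) (p := fun ed => ed.2 ∈ BD)
        have : 0 < (E.filter (fun ed => ed.2 ∉ BD)).card := by
          have : (E.filter (fun ed => ¬ ed.2 ∈ BD)).card
              = (E.filter (fun ed => ed.2 ∉ BD)).card := rfl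
          omega
        exact card_pos.mp this
      rw [mem_filter] at he
      obtain ⟨heE, heBD⟩ := he
      rw [hE, mem_filter] at heE
      obtain ⟨heMu, heAllowed⟩ := heE
      -- obtain the witness matching W with e.1 uncovered
      obtain ⟨W, hWg, hWc, hWP, hWB, hWa, hWidx⟩ :
          ∃ W, Good M W ∧ W.card = k ∧ (∀ p ∈ P, p ∉ D → p ∈ W) ∧
            (W.image fun p => p.1.2) = BP ∧
            e.1 ∉ (W.image fun p => p.1.1) ∧
            (∀ p ∈ W, p.2 ∈ IP ∪ used) := by
        rcases heAllowed with h | h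
        · exact ⟨P, hP, hPc, fun p hp _ => hp, rfl, h,
            fun p hp => mem_union_left _ (mem_image_of_mem Prod.snd hp)⟩
        · obtain ⟨d, hdD, hd1⟩ := mem_image.mp h
          obtain ⟨W, h1, h2, h3, h4, h5, h6⟩ := hINV d hdD
          exact ⟨W, h1, h2, h3, h4, hd1 ▸ h5, h6⟩
      have huW : u ∉ W.image Prod.snd := by
        intro hmem
        obtain ⟨p, hpW, hpu⟩ := mem_image.mp hmem
        have := hWidx p hpW
        rw [hpu] at this
        exact hu this
      by_cases hB : e.2 ∈ BP
      · -- GROW: e lands on the B-endpoint of a base edge p' ∉ D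
        right
        obtain ⟨p', hp'P, hp'2⟩ := mem_image.mp hB
        have hp'D : p' ∉ D := by
          intro h
          exact heBD (by rw [← hp'2]; exact mem_image_of_mem (fun p => p.1.2) h)
        have hp'W : p' ∈ W := hWP p' hp'P hp'D
        have hA' : e.1 ∉ (W.erase p').image (fun p => p.1.1) := by
          intro h
          exact hWa (image_subset_image (erase_subset _ _) h)
        have hB' : e.2 ∉ (W.erase p').image (fun p => p.1.2) := by
          intro h
          obtain ⟨q, hq, hq2⟩ := mem_image.mp h
          have hqW : q ∈ W := mem_of_mem_erase hq
          have : q = p' := hWg.2.1 q hqW p' hp'W (hq2.trans hp'2.symm)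
          exact (ne_of_mem_erase hq) this
        have hI' : u ∉ (W.erase p').image Prod.snd := by
          intro h
          exact huW (image_subset_image (erase_subset _ _) h)
        have hW'good : Good M (insert (e, u) (W.erase p')) :=
          good_insert (good_mono hWg (erase_subset _ _)) heMu hA' hB' hI'
        have henotin : (e, u) ∉ W.erase p' := by
          intro h
          exact hI' (mem_image_of_mem Prod.snd h)
        have hWpos : 1 ≤ W.card := card_pos.mpr ⟨p', hp'W⟩
        have hW'c : (insert (e, u) (W.erase p')).card = k := by
          rw [card_insert_of_notMem henotin, card_erase_of_mem hp'W, hWc]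
          omega
        refine ⟨insert p' D, insert u used, ?_, ?_, ?_, ?_, ?_⟩
        · exact insert_subset hp'P hDP
        · rw [card_insert_of_notMem hp'D, hDc]
        · rw [card_insert_of_notMem huU, hUc]
        · intro i hi
          rcases mem_insert.mp hi with rfl | hi
          · exact huIP
          · exact hUdisj i hi
        · intro d hd
          rcases mem_insert.mp hd with hdp | hdD
          · -- the new element p'
            rw [hdp]
            refine ⟨insert (e, u) (W.erase p'), hW'good, hW'c, ?_, ?_, ?_, ?_⟩
            · intro p hpP hpD'
              have hpD : p ∉ D := fun h => hpD' (mem_insert_of_mem h)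
              have hpp' : p ≠ p' := fun h => hpD' (by rw [h]; exact mem_insert_self p' D)
              exact mem_insert_of_mem (mem_erase.mpr ⟨hpp', hWP p hpP hpD⟩)
            · -- B-image is unchanged
              have himg : (insert (e, u) (W.erase p')).image (fun p => p.1.2)
                  = W.image (fun p => p.1.2) := by
                apply Subset.antisymm
                · intro b hb
                  rw [image_insert] at hb
                  rcases mem_insert.mp hb with hbe | hb
                  · rw [hbe, ← hp'2]
                    exact mem_image_of_mem _ hp'W
                  · exact image_subset_image (erase_subset _ _) hb
                · intro b hb
                  obtain ⟨q, hqW, rfl⟩ := mem_image.mp hb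
                  by_cases hq : q = p'
                  · subst hq
                    rw [image_insert]
                    exact mem_insert.mpr (Or.inl hp'2)
                  · rw [image_insert]
                    exact mem_insert_of_mem
                      (mem_image_of_mem _ (mem_erase.mpr ⟨hq, hqW⟩))
              rw [himg, hWB]
            · -- p'.1.1 is uncovered in the new W
              intro h
              rw [image_insert] at h
              rcases mem_insert.mp h with h | h
              · exact hWa (by rw [← h]; exact mem_image_of_mem (fun p => p.1.1) hp'W)
              · obtain ⟨q, hq, hq1⟩ := mem_image.mp h
                have hqW : q ∈ W := mem_of_mem_erase hq
                have : q = p' := hWg.1 q hqW p' hp'W hq1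
                exact (ne_of_mem_erase hq) this
            · intro p hp
              rcases mem_insert.mp hp with rfl | hp
              · exact mem_union_right _ (mem_insert_self u used)
              · have := hWidx p (mem_of_mem_erase hp)
                rcases mem_union.mp this with h | h
                · exact mem_union_left _ h
                · exact mem_union_right _ (mem_insert_of_mem h)
          · -- old elements of D keep their witnesses
            obtain ⟨W₀, h1, h2, h3, h4, h5, h6⟩ := hINV d hdD
            refine ⟨W₀, h1, h2, ?_, h4, h5, ?_⟩
            · intro p hpP hpD'
              exact h3 p hpP (fun h => hpD' (mem_insert_of_mem h))
            · intro p hp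
              rcases mem_union.mp (h6 p hp) with h | h
              · exact mem_union_left _ h
              · exact mem_union_right _ (mem_insert_of_mem h)
      · -- AUGMENT: e lands outside B(P) entirely
        left
        have hBW : e.2 ∉ W.image (fun p => p.1.2) := by
          rw [hWB]; exact hB
        have henotin : (e, u) ∉ W := by
          intro h
          exact huW (mem_image_of_mem Prod.snd h)
        refine ⟨insert (e, u) W, good_insert hWg heMu hWa hBW huW, ?_⟩
        rw [card_insert_of_notMem henotin, hWc]
  rcases key (k + 1) le_rfl with done | ⟨D, used, hDP, hDc, _, _, _⟩
  · exact done
  · exfalso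
    have := card_le_card hDP
    omega

/-- From nothing, grow a rainbow matching of any size up to `n`. -/
lemma exists_good {n : ℕ} (M : Fin (2 * n - 1) → Finset (A × B))
    (hM : ∀ i, IsMatching (M i) ∧ (M i).card = n) :
    ∀ k, k ≤ n → ∃ P, Good M P ∧ P.card = k := by
  intro k
  induction k with
  | zero =>
    intro _
    exact ⟨∅, ⟨by simp, by simp, by simp, by simp⟩, rfl⟩
  | succ k ih =>
    intro hk
    obtain ⟨P, hPg, hPc⟩ := ih (by omega)
    exact augment M hM (by omega) (by omega) P hPg hPc

end DriskoProof

/-- **Drisko's theorem.** Any family of `2n - 1` matchings of size `n` in a bipartite graph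
possesses a rainbow matching of size `n`. -/
theorem drisko {A B : Type*} {n : ℕ} (M : Fin (2 * n - 1) → Finset (A × B))
    (hM : ∀ i, IsMatching (M i) ∧ (M i).card = n) :
    HasRainbowMatching M n := by
  classical
  obtain ⟨P, hPg, hPc⟩ := DriskoProof.exists_good M hM n le_rfl
  have equiv : ↥P ≃ Fin n := P.equivFinOfCardEq hPc
  set g : Fin n → ↥P := fun j => equiv.symm j with hg
  refine ⟨fun j => (g j).1.1, fun j => (g j).1.2, ?_, ?_, ?_, ?_⟩
  · intro i j h
    have : (g i).1 = (g j).1 := hPg.2.2.1 (g i).1 (g i).2 (g j).1 (g j).2 h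
    have : g i = g j := Subtype.ext this
    exact equiv.symm.injective this
  · intro i j h
    have : (g i).1 = (g j).1 := hPg.1 (g i).1 (g i).2 (g j).1 (g j).2 h
    have : g i = g j := Subtype.ext this
    exact equiv.symm.injective this
  · intro i j h
    have : (g i).1 = (g j).1 := hPg.2.1 (g i).1 (g i).2 (g j).1 (g j).2 h
    have : g i = g j := Subtype.ext this
    exact equiv.symm.injective this
  · intro j
    exact hPg.2.2.2 (g j).1 (g j).2
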